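/- If A_{p-1} is a p-basis and k satisfies b_{k+1} ≥ 2b_0 (where b_i = a_{p-1} + ip), then the Stöhr sequence generated from A_{p-1+k} is eventually 1-periodic with constant difference p, provided A_{p-1} is p-extensible: a_{p-1+k+i+1} = a_{p-1+k+i} + p for all i ≥ 0. -/

import Mathlib

/-- Corollary to Theorem 6: for a `p`-extensible `p`-basis `A_{p-1}` and `k` with
`b_{k+1} ≥ 2*b_0`, the Stöhr sequence generated from `A_{p-1+k}` is 1-periodic
with value `p`: `s 0 = b_{k+1}` and `s (i+1) = s i + p` for all `i`. Here `s`
satisfies the Stöhr recurrence `s i = n(current basis) + 1`, the current basis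
being `A_{p-1+k}` extended by the previous Stöhr terms. -/
theorem stohr_one_periodic (p k : ℕ) (hp : 2 ≤ p) (a : ℕ → ℕ)
    (h0 : a 0 = 0) (h1 : a 1 = 1)
    (hmono : StrictMonoOn a (Set.Iic (p - 1)))
    (hres : ∀ r, 0 < r → r < p → ∃! i, (1 ≤ i ∧ i ≤ p - 1) ∧ a i % p = r)
    (hext : ∀ m : ℕ, ∀ x ≤ a (p - 1) + m * p,
      ∃ u, ((∃ i ≤ p - 1, a i = u) ∨ (∃ i ≤ m, a (p - 1) + i * p = u)) ∧
      ∃ v, ((∃ i ≤ p - 1, a i = v) ∨ (∃ i ≤ m, a (p - 1) + i * p = v)) ∧ u + v = x)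
    (hk : 2 * a (p - 1) ≤ a (p - 1) + (k + 1) * p)
    (s : ℕ → ℕ)
    (hs : ∀ i : ℕ,
      (∀ x ≤ s i - 1,
        ∃ u ∈ ({y | ∃ i' ≤ p - 1, a i' = y} ∪ {y | ∃ i' ≤ k, a (p - 1) + i' * p = y}
            ∪ {y | ∃ t < i, s t = y} : Set ℕ),
        ∃ v ∈ ({y | ∃ i' ≤ p - 1, a i' = y} ∪ {y | ∃ i' ≤ k, a (p - 1) + i' * p = y}
            ∪ {y | ∃ t < i, s t = y} : Set ℕ), u + v = x) ∧
      ¬ (∃ u ∈ ({y | ∃ i' ≤ p - 1, a i' = y} ∪ {y | ∃ i' ≤ k, a (p - 1) + i' * p = y}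
            ∪ {y | ∃ t < i, s t = y} : Set ℕ),
         ∃ v ∈ ({y | ∃ i' ≤ p - 1, a i' = y} ∪ {y | ∃ i' ≤ k, a (p - 1) + i' * p = y}
            ∪ {y | ∃ t < i, s t = y} : Set ℕ), u + v = s i)) :
    s 0 = a (p - 1) + (k + 1) * p ∧ ∀ i : ℕ, s (i + 1) = s i + p := by
  classical
  have hq1 : 1 ≤ p - 1 := by omega
  have hp0 : 0 < p := by omega
  -- Step 1: indices 1..p-1 have nonzero residues mod p
  have hA : ∀ j, 1 ≤ j → j ≤ p - 1 → a j % p ≠ 0 := by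
    intro j0 hj1 hj2 hz
    have hgex : ∀ r, 0 < r → r < p → ∃ i, (1 ≤ i ∧ i ≤ p - 1) ∧ a i % p = r :=
      fun r hr1 hr2 => (hres r hr1 hr2).exists
    set g : ℕ → ℕ := fun r => if h : 0 < r ∧ r < p then (hgex r h.1 h.2).choose else 0
      with hgdef
    have hgspec : ∀ r, 0 < r → r < p → (1 ≤ g r ∧ g r ≤ p - 1) ∧ a (g r) % p = r := by
      intro r hr1 hr2
      have : g r = (hgex r hr1 hr2).choose := by
        simp only [hgdef, dif_pos (show 0 < r ∧ r < p from ⟨hr1, hr2⟩)]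
      rw [this]
      exact (hgex r hr1 hr2).choose_spec
    have hcard : (Finset.Icc 1 (p - 1)).card ≤ ((Finset.Icc 1 (p - 1)).erase j0).card := by
      apply Finset.card_le_card_of_injOn g
      · intro r hr
        simp only [Finset.mem_coe, Finset.mem_Icc] at hr
        have hr1 : 0 < r := hr.1
        have hr2 : r < p := by omega
        have hsp := hgspec r hr1 hr2
        refine Finset.mem_erase.mpr ⟨?_, Finset.mem_Icc.mpr ⟨hsp.1.1, hsp.1.2⟩⟩
        intro he
        rw [he] at hsp
        omega
      · intro r1 h1 r2 h2 he
        simp only [Finset.coe_Icc, Set.mem_Icc] at h1 h2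
        have hs1 := (hgspec r1 h1.1 (by omega)).2
        have hs2 := (hgspec r2 h2.1 (by omega)).2
        rw [he] at hs1
        omega
    rw [Finset.card_erase_of_mem (Finset.mem_Icc.mpr ⟨hj1, hj2⟩), Nat.card_Icc] at hcard
    omega
  have hpne : a (p - 1) % p ≠ 0 := hA (p - 1) hq1 le_rfl
  have hale : ∀ i ≤ p - 1, a i ≤ a (p - 1) := by
    intro i hi
    exact hmono.monotoneOn (Set.mem_Iic.mpr hi) (Set.mem_Iic.mpr le_rfl) hi
  -- the extended-basis membership predicate
  set E : ℕ → ℕ → Prop := fun m u =>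
    (∃ i ≤ p - 1, a i = u) ∨ (∃ i ≤ m, a (p - 1) + i * p = u) with hEdef
  -- Step 2: non-representability of b_{m+1}
  have hC : ∀ m, k ≤ m → ∀ u v, E m u → E m v → u + v ≠ a (p - 1) + (m + 1) * p := by
    intro m hm u v hu hv heq
    have hkm : (k + 1) * p ≤ (m + 1) * p := Nat.mul_le_mul_right p (by omega)
    rcases hu with ⟨i, hi, hiu⟩ | ⟨i, hi, hiu⟩ <;>
      rcases hv with ⟨j, hj, hjv⟩ | ⟨j, hj, hjv⟩
    · -- a i + a j
      have h1 := hale i hi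
      have h2 := hale j hj
      have he : a (p - 1) = (m + 1) * p := by omega
      exact hpne (by rw [he]; exact Nat.mul_mod_left _ _)
    · -- a i + (a(p-1)+j*p)
      have h2 : a i + j * p = (m + 1) * p := by omega
      have hjm : j * p + p ≤ (m + 1) * p := by
        have h4 := Nat.mul_le_mul_right p (show j + 1 ≤ m + 1 by omega)
        have h5 : (j + 1) * p = j * p + p := by ring
        omega
      have hd : p ∣ a i := by
        have h3 : a i = (m + 1) * p - j * p := by omega
        rw [h3]
        exact Nat.dvd_sub (dvd_mul_left p (m + 1)) (dvd_mul_left p j)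
      have hi0 : 1 ≤ i := by
        rcases Nat.eq_zero_or_pos i with h | h
        · rw [h, h0] at h2; omega
        · omega
      exact hA i hi0 hi (Nat.mod_eq_zero_of_dvd hd)
    · -- (a(p-1)+i*p) + a j
      have h2 : a j + i * p = (m + 1) * p := by omega
      have him : i * p + p ≤ (m + 1) * p := by
        have h4 := Nat.mul_le_mul_right p (show i + 1 ≤ m + 1 by omega)
        have h5 : (i + 1) * p = i * p + p := by ring
        omega
      have hd : p ∣ a j := by
        have h3 : a j = (m + 1) * p - i * p := by omega
        rw [h3]
        exact Nat.dvd_sub (dvd_mul_left p (m + 1)) (dvd_mul_left p i)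
      have hj0 : 1 ≤ j := by
        rcases Nat.eq_zero_or_pos j with h | h
        · rw [h, h0] at h2; omega
        · omega
      exact hA j hj0 hj (Nat.mod_eq_zero_of_dvd hd)
    · -- both extension elements
      have h2 : a (p - 1) + i * p + j * p = (m + 1) * p := by omega
      have hd : p ∣ a (p - 1) := by
        have h3 : a (p - 1) = (m + 1) * p - i * p - j * p := by omega
        rw [h3]
        exact Nat.dvd_sub (Nat.dvd_sub (dvd_mul_left p (m + 1)) (dvd_mul_left p i)) (dvd_mul_left p j)
      exact hpne (Nat.mod_eq_zero_of_dvd hd)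
  
  -- Step 3: representability below b_{m+1}
  have hD : ∀ m x, x < a (p - 1) + (m + 1) * p →
      ∃ u, E m u ∧ ∃ v, E m v ∧ u + v = x := by
    intro m x hx
    obtain ⟨u, hu, v, hv, huv⟩ := hext (m + 1) x (by omega)
    have step : ∀ w, w ≤ x →
        ((∃ i ≤ p - 1, a i = w) ∨ (∃ i ≤ m + 1, a (p - 1) + i * p = w)) → E m w := by
      intro w hw hw2
      rcases hw2 with h | ⟨i, hi, hiw⟩
      · exact Or.inl h
      · refine Or.inr ⟨i, ?_, hiw⟩
        by_contra hcon
        have hieq : i = m + 1 := by omega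
        rw [hieq] at hiw
        omega
    exact ⟨u, step u (by omega) hu, v, step v (by omega) hv, huv⟩
  -- Step 4: main induction: s i = a(p-1) + (k+1+i)*p
  have key : ∀ i, s i = a (p - 1) + (k + 1 + i) * p := by
    intro i
    induction i using Nat.strong_induction_on with
    | _ i IH =>
      obtain ⟨hrep, hnon⟩ := hs i
      -- translate between the set in hs and E (k+i)
      have trans1 : ∀ u, u ∈ ({y | ∃ i' ≤ p - 1, a i' = y}
          ∪ {y | ∃ i' ≤ k, a (p - 1) + i' * p = y}
          ∪ {y | ∃ t < i, s t = y} : Set ℕ) ↔ E (k + i) u := by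
        intro u
        simp only [Set.mem_union, Set.mem_setOf_eq, hEdef]
        constructor
        · rintro ((h | ⟨j, hj, hju⟩) | ⟨t, ht, htu⟩)
          · exact Or.inl h
          · exact Or.inr ⟨j, by omega, hju⟩
          · refine Or.inr ⟨k + 1 + t, by omega, ?_⟩
            rw [← IH t ht]
            exact htu
        · rintro (h | ⟨j, hj, hju⟩)
          · exact Or.inl (Or.inl h)
          · rcases le_or_gt j k with hjk | hjk
            · exact Or.inl (Or.inr ⟨j, hjk, hju⟩)
            · refine Or.inr ⟨j - (k + 1), by omega, ?_⟩
              rw [IH (j - (k + 1)) (by omega), show k + 1 + (j - (k + 1)) = j by omega]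
              exact hju
      have heq2 : a (p - 1) + (k + 1 + i) * p = a (p - 1) + ((k + i) + 1) * p := by
        ring_nf
      have hle : s i ≤ a (p - 1) + (k + 1 + i) * p := by
        by_contra h
        push_neg at h
        obtain ⟨u, hu, v, hv, huv⟩ := hrep (a (p - 1) + (k + 1 + i) * p) (by omega)
        exact hC (k + i) (by omega) u v ((trans1 u).mp hu) ((trans1 v).mp hv)
          (by rw [← heq2]; exact huv)
      have hge : a (p - 1) + (k + 1 + i) * p ≤ s i := by
        by_contra h
        push_neg at h
        obtain ⟨u, hu, v, hv, huv⟩ := hD (k + i) (s i) (by omega)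
        exact hnon ⟨u, (trans1 u).mpr hu, v, (trans1 v).mpr hv, huv⟩
      omega
  refine ⟨by rw [key 0], fun i => ?_⟩
  rw [key (i + 1), key i]
  ring
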